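/- Let H be a real Hilbert space, f : H → ℝ ∪ {+∞} a proper closed convex function which is bounded below, and S_f an affine support set of f. Then sup { a : (a, 0) ∈ S_f } = inf_{x ∈ H} f(x). -/

import Mathlib

open Pointwise Filter Topology

/-- for bounded below f, sup { a : (a,0) ∈ S_f } = inf f. -/
theorem sup_axis_eq_inf
    {H : Type*} [NormedAddCommGroup H] [InnerProductSpace ℝ H] [CompleteSpace H]
    (f : H → EReal) (S : Set (ℝ × H))
    (hproper_top : ∃ x, f x ≠ ⊤) (hproper_bot : ∀ x, f x ≠ ⊥)
    (hlsc : LowerSemicontinuous f)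
    (hconv : Convex ℝ {p : H × ℝ | f p.1 ≤ (p.2 : EReal)})
    (hSclosed : IsClosed S) (hSconv : Convex ℝ S)
    (hrep : ∀ x, f x = ⨆ p ∈ S, ((p.1 + inner ℝ p.2 x : ℝ) : EReal))
    (hbdd : ∃ c : ℝ, ∀ x, (c : EReal) ≤ f x) :
    (⨆ a ∈ {a : ℝ | (a, (0 : H)) ∈ S}, (a : EReal)) = ⨅ x, f x := by
  classical
  obtain ⟨x₀, hx₀⟩ := hproper_top
  obtain ⟨c, hc⟩ := hbdd
  have hminor : ∀ p ∈ S, ∀ x : H, ((p.1 + inner ℝ p.2 x : ℝ) : EReal) ≤ f x := by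
    intro p hp x
    rw [hrep x]
    exact le_iSup₂_of_le p hp le_rfl
  set M : ℝ := (f x₀).toReal with hM
  have hfx₀ : f x₀ = (M : EReal) := (EReal.coe_toReal hx₀ (hproper_bot x₀)).symm
  have hMbound : ∀ p ∈ S, p.1 + inner ℝ p.2 x₀ ≤ M := by
    intro p hp
    have h := hminor p hp x₀
    rw [hfx₀] at h
    exact_mod_cast h
  set m : EReal := ⨅ x, f x with hm
  have hcm : (c : EReal) ≤ m := le_iInf hc
  have hle : (⨆ a ∈ {a : ℝ | (a, (0 : H)) ∈ S}, (a : EReal)) ≤ m := by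
    refine iSup₂_le fun a ha => le_iInf fun x => ?_
    have h := hminor (a, 0) ha x
    simpa using h
  refine le_antisymm hle ?_
  by_contra hcon
  rw [not_le] at hcon
  obtain ⟨t, ht1, ht2⟩ := exists_between hcon
  set tr : ℝ := t.toReal with htrdef
  have htcoe : (tr : EReal) = t := EReal.coe_toReal (ne_top_of_lt ht2) (ne_bot_of_gt ht1)
  have hSne : S.Nonempty := by
    rcases S.eq_empty_or_nonempty with h | h
    · exfalso
      apply hproper_bot x₀
      rw [hrep x₀, h]
      simp
    · exact h
  set T : Set (ℝ × H) := S + (Set.Iic (0:ℝ)) ×ˢ ({0} : Set H) with hT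
  have hTconv : Convex ℝ (closure T) :=
    (hSconv.add ((convex_Iic 0).prod (convex_singleton 0))).closure
  have hST : S ⊆ closure T := by
    intro p hp
    apply subset_closure
    have h : p + ((0:ℝ), (0:H)) ∈ T :=
      Set.add_mem_add hp (Set.mk_mem_prod (Set.mem_Iic.mpr le_rfl) rfl)
    rwa [Prod.mk_zero_zero, add_zero] at h
  -- the point (tr, 0) is not in the closure of T
  have hpnot : ((tr, (0:H)) : ℝ × H) ∉ closure T := by
    intro hmem
    rw [mem_closure_iff_seq_limit] at hmem
    obtain ⟨w, hwT, hwlim⟩ := hmem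
    choose p hpS q hq hpq using fun n => Set.mem_add.mp (hwT n)
    have hq1 : ∀ n, (q n).1 ≤ 0 := fun n => (hq n).1
    have hq2 : ∀ n, (q n).2 = 0 := fun n => (hq n).2
    have hw1 : ∀ n, (w n).1 = (p n).1 + (q n).1 := fun n => by rw [← hpq n]; rfl
    have hw2 : ∀ n, (w n).2 = (p n).2 := fun n => by
      rw [← hpq n]; show (p n).2 + (q n).2 = (p n).2; rw [hq2 n, add_zero]
    have hlim1 : Tendsto (fun n => (w n).1) atTop (𝓝 tr) :=
      (continuous_fst.tendsto _).comp hwlim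
    have hlim2 : Tendsto (fun n => (p n).2) atTop (𝓝 (0:H)) := by
      have h2 : Tendsto (fun n => (w n).2) atTop (𝓝 (0:H)) :=
        (continuous_snd.tendsto _).comp hwlim
      exact h2.congr hw2
    have hnormv : Tendsto (fun n => ‖(p n).2‖) atTop (𝓝 (0:ℝ)) := by
      simpa using hlim2.norm
    obtain ⟨Kv, hKv⟩ := hnormv.bddAbove_range
    obtain ⟨Kw, hKw⟩ := hlim1.bddBelow_range
    have hmemIcc : ∀ n, (p n).1 ∈ Set.Icc Kw (M + Kv * ‖x₀‖) := by
      intro n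
      constructor
      · have h1 := hKw (Set.mem_range_self n)
        have h2 := hw1 n
        have h3 := hq1 n
        linarith
      · have h1 := hMbound (p n) (hpS n)
        have h2 : |(inner ℝ ((p n).2) x₀ : ℝ)| ≤ ‖(p n).2‖ * ‖x₀‖ := abs_real_inner_le_norm _ _
        have h3 : ‖(p n).2‖ ≤ Kv := hKv (Set.mem_range_self n)
        have h4 := mul_le_mul_of_nonneg_right h3 (norm_nonneg x₀)
        have h5 := neg_abs_le (inner ℝ ((p n).2) x₀ : ℝ)
        linarith
    obtain ⟨a, _, φ, hφ, haφ⟩ := isCompact_Icc.tendsto_subseq hmemIcc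
    have hvφ : Tendsto (fun n => (p (φ n)).2) atTop (𝓝 (0:H)) :=
      hlim2.comp hφ.tendsto_atTop
    have hpφ : Tendsto (fun n => p (φ n)) atTop (𝓝 ((a, (0:H)) : ℝ × H)) := by
      have h := Filter.Tendsto.prodMk_nhds haφ hvφ
      simpa using h
    have haS : ((a, (0:H)) : ℝ × H) ∈ S :=
      hSclosed.mem_of_tendsto hpφ (Filter.Eventually.of_forall fun n => hpS (φ n))
    have htra : tr ≤ a := by
      refine le_of_tendsto_of_tendsto' (hlim1.comp hφ.tendsto_atTop) haφ fun n => ?_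
      have h2 := hw1 (φ n)
      have h3 := hq1 (φ n)
      simp only [Function.comp_apply]
      linarith
    have hsup : (a : EReal) ≤ ⨆ a' ∈ {a : ℝ | (a, (0 : H)) ∈ S}, (a' : EReal) :=
      le_iSup₂_of_le a haS le_rfl
    have hlt : (a : EReal) < (tr : EReal) := by
      rw [htcoe]; exact lt_of_le_of_lt hsup ht1
    exact absurd htra (not_le.mpr (EReal.coe_lt_coe_iff.mp hlt))
  obtain ⟨φ, u, hsep, hpu⟩ := geometric_hahn_banach_closed_point hTconv isClosed_closure hpnot
  set β : ℝ := φ (1, 0) with hβdef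
  have hφ0 : φ ((0:ℝ), (0:H)) = 0 := by rw [Prod.mk_zero_zero, map_zero]
  have hφdec : ∀ (a : ℝ) (v : H), φ (a, v) = a * β + φ (0, v) := by
    intro a v
    have h : ((a, v) : ℝ × H) = a • ((1:ℝ), (0:H)) + ((0:ℝ), v) := by
      ext <;> simp
    rw [h, map_add, map_smul, smul_eq_mul]
  have hβ_nonneg : 0 ≤ β := by
    by_contra hβ
    push_neg at hβ
    obtain ⟨p₀, hp₀⟩ := hSne
    set C : ℝ := (u - φ (0, p₀.2) - p₀.1 * β) / (-β) with hC
    set lam : ℝ := max C 0 + 1 with hlam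
    have hlam_pos : 0 ≤ lam := by
      have := le_max_right C 0
      simp only [hlam]; linarith
    have hmem : ((p₀.1 - lam, p₀.2) : ℝ × H) ∈ closure T := by
      apply subset_closure
      have h : p₀ + ((-lam : ℝ), (0:H)) ∈ T :=
        Set.add_mem_add hp₀ (Set.mk_mem_prod (Set.mem_Iic.mpr (neg_nonpos.mpr hlam_pos)) rfl)
      have heq : p₀ + ((-lam : ℝ), (0:H)) = ((p₀.1 - lam, p₀.2) : ℝ × H) := by
        ext <;> simp [sub_eq_add_neg]
      rwa [heq] at h
    have hlt := hsep _ hmem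
    rw [hφdec] at hlt
    have hCl : C < lam := lt_of_le_of_lt (le_max_left C 0) (by simp only [hlam]; linarith)
    have hmul := mul_lt_mul_of_pos_right hCl (neg_pos.mpr hβ)
    rw [hC, div_mul_cancel₀ _ (by linarith : -β ≠ 0), mul_neg] at hmul
    rw [sub_mul] at hlt
    linarith
  rcases eq_or_lt_of_le hβ_nonneg with hβ0 | hβpos
  · -- β = 0
    have hu_neg : u < 0 := by
      have h := hpu
      rw [hφdec, ← hβ0, mul_zero, zero_add, hφ0] at h
      exact h
    set ψ : H →L[ℝ] ℝ := φ.comp (ContinuousLinearMap.inr ℝ ℝ H) with hψ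
    set y : H := (InnerProductSpace.toDual ℝ H).symm ψ with hy
    have hyv : ∀ v : H, (inner ℝ y v : ℝ) = φ (0, v) := fun v =>
      InnerProductSpace.toDual_symm_apply
    have hkey : ∀ p ∈ S, φ ((0:ℝ), p.2) < u := by
      intro p hp
      have h : φ (p.1, p.2) < u := hsep p (hST hp)
      rw [hφdec, ← hβ0, mul_zero, zero_add] at h
      exact h
    obtain ⟨n, hn⟩ := exists_nat_gt ((M - c) / (-u))
    have hbd : f (x₀ + (n:ℝ) • y) ≤ ((M + n * u : ℝ) : EReal) := by
      rw [hrep (x₀ + (n:ℝ) • y)]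
      refine iSup₂_le fun p hp => ?_
      rw [EReal.coe_le_coe_iff]
      have h1 : p.1 + inner ℝ p.2 x₀ ≤ M := hMbound p hp
      have h2 : (inner ℝ p.2 y : ℝ) < u := by
        rw [real_inner_comm, hyv]; exact hkey p hp
      have hinner : (inner ℝ p.2 (x₀ + (n:ℝ) • y) : ℝ)
          = inner ℝ p.2 x₀ + (n:ℝ) * inner ℝ p.2 y := by
        rw [inner_add_right, real_inner_smul_right]
      rw [hinner]
      have h3 : (n:ℝ) * inner ℝ p.2 y ≤ (n:ℝ) * u :=
        mul_le_mul_of_nonneg_left h2.le (Nat.cast_nonneg n)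
      linarith
    have hcontra : (c : ℝ) ≤ M + n * u :=
      EReal.coe_le_coe_iff.mp (le_trans (hc _) hbd)
    have hmul := mul_lt_mul_of_pos_right hn (neg_pos.mpr hu_neg)
    rw [div_mul_cancel₀ _ (ne_of_gt (neg_pos.mpr hu_neg)), mul_neg] at hmul
    linarith
  · -- β > 0
    set ψ : H →L[ℝ] ℝ := β⁻¹ • (φ.comp (ContinuousLinearMap.inr ℝ ℝ H)) with hψ
    set y : H := (InnerProductSpace.toDual ℝ H).symm ψ with hy
    have hyv : ∀ v : H, (inner ℝ y v : ℝ) = β⁻¹ * φ (0, v) := fun v => by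
      rw [hy, InnerProductSpace.toDual_symm_apply]; rfl
    have hβne : β ≠ 0 := ne_of_gt hβpos
    have hfy : f y ≤ ((u / β : ℝ) : EReal) := by
      rw [hrep y]
      refine iSup₂_le fun p hp => ?_
      rw [EReal.coe_le_coe_iff]
      have h1 : φ (p.1, p.2) < u := hsep p (hST hp)
      rw [hφdec] at h1
      have h2 : (inner ℝ p.2 y : ℝ) = β⁻¹ * φ (0, p.2) := by
        rw [real_inner_comm, hyv]
      rw [h2, le_div_iff₀ hβpos]
      have hexp : (p.1 + β⁻¹ * φ ((0:ℝ), p.2)) * β = p.1 * β + φ ((0:ℝ), p.2) := by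
        field_simp
      rw [hexp]
      linarith
    have humt : ((u / β : ℝ) : EReal) < t := by
      rw [← htcoe, EReal.coe_lt_coe_iff]
      have h := hpu
      rw [hφdec, hφ0, add_zero] at h
      rw [div_lt_iff₀ hβpos]
      exact h
    have h1 : m ≤ f y := iInf_le _ y
    have h2 : t < t := lt_of_lt_of_le ht2 (le_trans h1 (le_trans hfy humt.le))
    exact lt_irrefl _ h2
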